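/- Define φ(x,y) = −((Q−2)/2) · ( |x|^{2α} / [[(x,y)]]_λ^{2(1+α)} ) · ( x , (1+α) y / |x|^{α} ) for (x,y) ∈ ℝ^{N_1}×ℝ^{N_2} with x ≠ 0. Then at every point (x,y) with x ≠ 0, one has |φ(x,y)|^2 + div_λ φ(x,y) = −((Q−2)/2)^2 · |x|^{2α} / [[(x,y)]]_λ^{2(1+α)}, where div_λ φ = div_x φ^{(1)} + |x|^α div_y φ^{(2)} and φ = (φ^{(1)}, φ^{(2)}) are the ℝ^{N_1}- and ℝ^{N_2}-components of φ. -/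

import Mathlib

open MeasureTheory Finset

noncomputable section

/-- the homogeneous norm `[[(x,y)]]_λ = (|x|^{2(1+α)} + (1+α)²|y|²)^{1/(2(1+α))}` associated
to the Grushin operator. -/
def grushinNorm {n₁ n₂ : ℕ} (α : ℝ) (x : EuclideanSpace ℝ (Fin n₁))
    (y : EuclideanSpace ℝ (Fin n₂)) : ℝ :=
  (‖x‖ ^ (2 * (1 + α)) + (1 + α) ^ 2 * ‖y‖ ^ 2) ^ (1 / (2 * (1 + α)))

/-- the gradient in the `x`-variables. -/
def gradX {n₁ n₂ : ℕ}
    (u : EuclideanSpace ℝ (Fin n₁) × EuclideanSpace ℝ (Fin n₂) → ℝ)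
    (x : EuclideanSpace ℝ (Fin n₁)) (y : EuclideanSpace ℝ (Fin n₂)) :
    EuclideanSpace ℝ (Fin n₁) :=
  gradient (fun x' => u (x', y)) x

/-- the gradient in the `y`-variables. -/
def gradY {n₁ n₂ : ℕ}
    (u : EuclideanSpace ℝ (Fin n₁) × EuclideanSpace ℝ (Fin n₂) → ℝ)
    (x : EuclideanSpace ℝ (Fin n₁)) (y : EuclideanSpace ℝ (Fin n₂)) :
    EuclideanSpace ℝ (Fin n₂) :=
  gradient (fun y' => u (x, y')) y

/-- the norm of the Grushin gradient `∇_λ u = (∇_x u, |x|^α ∇_y u)`. -/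
def grushinGradNorm {n₁ n₂ : ℕ} (α : ℝ)
    (u : EuclideanSpace ℝ (Fin n₁) × EuclideanSpace ℝ (Fin n₂) → ℝ)
    (x : EuclideanSpace ℝ (Fin n₁)) (y : EuclideanSpace ℝ (Fin n₂)) : ℝ :=
  Real.sqrt (‖gradX u x y‖ ^ 2 + ‖x‖ ^ (2 * α) * ‖gradY u x y‖ ^ 2)

/-- the homogeneous dimension `Q = N₁ + (1+α)N₂`. -/
def QG (n₁ n₂ : ℕ) (α : ℝ) : ℝ := n₁ + (1 + α) * n₂

/-- the first (ℝ^{N₁}-) component of the vector field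
`φ(x,y) = -((Q-2)/2)(|x|^{2α}/[[(x,y)]]_λ^{2(1+α)})(x, (1+α)y/|x|^α)`. -/
def grushinPhi1 {n₁ n₂ : ℕ} (α : ℝ) (x : EuclideanSpace ℝ (Fin n₁))
    (y : EuclideanSpace ℝ (Fin n₂)) : EuclideanSpace ℝ (Fin n₁) :=
  (-((QG n₁ n₂ α - 2) / 2) * (‖x‖ ^ (2 * α) / grushinNorm α x y ^ (2 * (1 + α)))) • x

/-- the second (ℝ^{N₂}-) component of the vector field `φ`. -/
def grushinPhi2 {n₁ n₂ : ℕ} (α : ℝ) (x : EuclideanSpace ℝ (Fin n₁))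
    (y : EuclideanSpace ℝ (Fin n₂)) : EuclideanSpace ℝ (Fin n₂) :=
  (-((QG n₁ n₂ α - 2) / 2) * (‖x‖ ^ (2 * α) / grushinNorm α x y ^ (2 * (1 + α))) *
      ((1 + α) / ‖x‖ ^ α)) • y

lemma sum_fderiv_smul_id {n : ℕ} {g : ℝ → ℝ} {g' : ℝ} (x : EuclideanSpace ℝ (Fin n))
    (hg : HasDerivAt g g' (‖x‖ ^ 2)) :
    ∑ j : Fin n, fderiv ℝ (fun x' => g (‖x'‖ ^ 2) • x') x (EuclideanSpace.single j 1) j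
      = 2 * ‖x‖ ^ 2 * g' + n * g (‖x‖ ^ 2) := by
  have hn : HasFDerivAt (fun x' : EuclideanSpace ℝ (Fin n) => ‖x'‖ ^ 2)
      (2 • (innerSL ℝ x)) x := (hasStrictFDerivAt_norm_sq x).hasFDerivAt
  have hu : HasFDerivAt (fun x' : EuclideanSpace ℝ (Fin n) => g (‖x'‖ ^ 2))
      (g' • (2 • (innerSL ℝ x))) x := hg.comp_hasFDerivAt x hn
  have hF : HasFDerivAt (fun x' : EuclideanSpace ℝ (Fin n) => g (‖x'‖ ^ 2) • x')
      (g (‖x‖ ^ 2) • ContinuousLinearMap.id ℝ (EuclideanSpace ℝ (Fin n)) +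
        (g' • 2 • (innerSL ℝ) x).smulRight x) x := hu.smul (hasFDerivAt_id x)
  rw [hF.fderiv]
  have hx2 : ∑ j, x j * x j = ‖x‖ ^ 2 := by
    rw [EuclideanSpace.norm_eq, Real.sq_sqrt (by positivity)]
    simp [sq]
  have happ : ∀ j : Fin n,
      (g (‖x‖ ^ 2) • ContinuousLinearMap.id ℝ (EuclideanSpace ℝ (Fin n)) +
        (g' • 2 • (innerSL ℝ) x).smulRight x) (EuclideanSpace.single j 1) j
      = g (‖x‖ ^ 2) + 2 * g' * (x j * x j) := by
    intro j
    simp [ContinuousLinearMap.smulRight_apply, real_inner_comm,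
      EuclideanSpace.inner_single_left, EuclideanSpace.inner_single_right, mul_comm]
    ring
  simp only [happ]
  rw [Finset.sum_add_distrib, Finset.sum_const, ← Finset.mul_sum, hx2, card_univ,
    Fintype.card_fin, nsmul_eq_mul]
  ring

lemma rpow_two_mul {m : ℕ} (z : EuclideanSpace ℝ (Fin m)) (p : ℝ) :
    ‖z‖ ^ (2 * p) = (‖z‖ ^ 2 : ℝ) ^ p := by
  rw [Real.rpow_mul (norm_nonneg z), show ((2:ℝ)) = ((2:ℕ) : ℝ) by norm_num,
    Real.rpow_natCast]

lemma grushinNorm_pow {n₁ n₂ : ℕ} (α : ℝ) (hα : 0 ≤ α) (x : EuclideanSpace ℝ (Fin n₁))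
    (y : EuclideanSpace ℝ (Fin n₂)) :
    grushinNorm α x y ^ (2 * (1 + α)) = (‖x‖ ^ 2 : ℝ) ^ (1 + α) + (1 + α) ^ 2 * ‖y‖ ^ 2 := by
  have h1 : (0:ℝ) < 2 * (1 + α) := by positivity
  have h0 : (0:ℝ) ≤ ‖x‖ ^ (2 * (1 + α)) + (1 + α) ^ 2 * ‖y‖ ^ 2 := by positivity
  rw [grushinNorm, ← Real.rpow_mul h0, one_div_mul_cancel h1.ne', Real.rpow_one,
    rpow_two_mul]

set_option maxHeartbeats 2000000 in
/-- the pointwise identity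
`|φ|² + div_λ φ = -((Q-2)/2)² |x|^{2α}/[[(x,y)]]_λ^{2(1+α)}` at points with `x ≠ 0`,
where `div_λ φ = div_x φ^{(1)} + |x|^α div_y φ^{(2)}`. -/
theorem grushin_phi_identity (n₁ n₂ : ℕ) (h₁ : 1 ≤ n₁) (h₂ : 1 ≤ n₂)
    (α : ℝ) (hα : 0 ≤ α)
    (x : EuclideanSpace ℝ (Fin n₁)) (y : EuclideanSpace ℝ (Fin n₂)) (hx : x ≠ 0) :
    ‖grushinPhi1 α x y‖ ^ 2 + ‖grushinPhi2 α x y‖ ^ 2 +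
        ((∑ j : Fin n₁,
            fderiv ℝ (fun x' => grushinPhi1 α x' y) x (EuclideanSpace.single j 1) j) +
          ‖x‖ ^ α *
            ∑ j : Fin n₂,
              fderiv ℝ (fun y' => grushinPhi2 α x y') y (EuclideanSpace.single j 1) j) =
      -(((QG n₁ n₂ α - 2) / 2) ^ 2) *
        (‖x‖ ^ (2 * α) / grushinNorm α x y ^ (2 * (1 + α))) := by
  have hxn : (0:ℝ) < ‖x‖ := norm_pos_iff.2 hx
  have hc : (0:ℝ) < 1 + α := by linarith
  set C : ℝ := -((QG n₁ n₂ α - 2) / 2) with hC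
  set t : ℝ := ‖x‖ ^ 2 with htdef
  set s : ℝ := ‖y‖ ^ 2 with hsdef
  have ht0 : 0 < t := by positivity
  have hs0 : 0 ≤ s := by positivity
  set K : ℝ := (1 + α) ^ 2 * s with hKdef
  have hρ : 0 < t ^ (1 + α) + K := by positivity
  set g : ℝ → ℝ := fun u => C * (u ^ α / (u ^ (1 + α) + K)) with hgdef
  set h : ℝ → ℝ := fun u =>
    C * (‖x‖ ^ (2 * α) / (t ^ (1 + α) + (1 + α) ^ 2 * u)) * ((1 + α) / ‖x‖ ^ α) with hhdef
  -- rewrite the vector fields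
  have key1 : (fun x' : EuclideanSpace ℝ (Fin n₁) => grushinPhi1 α x' y)
      = fun x' => g (‖x'‖ ^ 2) • x' := by
    funext x'
    rw [grushinPhi1, grushinNorm_pow α hα, rpow_two_mul, hgdef, ← hC, ← hsdef, ← hKdef]
  have key2 : (fun y' : EuclideanSpace ℝ (Fin n₂) => grushinPhi2 α x y')
      = fun y' => h (‖y'‖ ^ 2) • y' := by
    funext y'
    rw [grushinPhi2, grushinNorm_pow α hα, hhdef, ← hC, ← htdef]
  -- derivative of g at t
  have h1 : HasDerivAt (fun u : ℝ => u ^ α) (α * t ^ (α - 1)) t :=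
    Real.hasDerivAt_rpow_const (Or.inl ht0.ne')
  have h2' : HasDerivAt (fun u : ℝ => u ^ (1 + α)) ((1 + α) * t ^ α) t := by
    have := Real.hasDerivAt_rpow_const (x := t) (p := 1 + α) (Or.inl ht0.ne')
    rwa [show (1:ℝ) + α - 1 = α by ring] at this
  have h2 : HasDerivAt (fun u : ℝ => u ^ (1 + α) + K) ((1 + α) * t ^ α) t :=
    h2'.add_const K
  have hg : HasDerivAt g
      (C * ((α * t ^ (α - 1) * (t ^ (1 + α) + K) - t ^ α * ((1 + α) * t ^ α)) /
        (t ^ (1 + α) + K) ^ 2)) t :=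
    (h1.div h2 hρ.ne').const_mul C
  -- derivative of h at s
  have hρ2 : 0 < t ^ (1 + α) + (1 + α) ^ 2 * s := by positivity
  have hden : HasDerivAt (fun u : ℝ => t ^ (1 + α) + (1 + α) ^ 2 * u) ((1 + α) ^ 2) s := by
    simpa using ((hasDerivAt_id s).const_mul ((1 + α) ^ 2)).const_add (t ^ (1 + α))
  have hh : HasDerivAt h
      ((C * ((0 * (t ^ (1 + α) + (1 + α) ^ 2 * s) - ‖x‖ ^ (2 * α) * (1 + α) ^ 2) /
        (t ^ (1 + α) + (1 + α) ^ 2 * s) ^ 2)) * ((1 + α) / ‖x‖ ^ α)) s :=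
    ((((hasDerivAt_const s (‖x‖ ^ (2 * α))).div hden hρ2.ne').const_mul C).mul_const _)
  -- substitute into the goal
  rw [key1, key2, sum_fderiv_smul_id x hg, sum_fderiv_smul_id y hh,
    show grushinPhi1 α x y = g (‖x‖ ^ 2) • x from congrFun key1 x,
    show grushinPhi2 α x y = h (‖y‖ ^ 2) • y from congrFun key2 y,
    norm_smul, norm_smul, grushinNorm_pow α hα, rpow_two_mul]
  simp only [hgdef, hhdef, Real.norm_eq_abs, mul_pow, sq_abs, ← htdef, ← hsdef, ← hKdef]
  -- now a scalar identity in rpow's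
  have hb : (0:ℝ) < ‖x‖ ^ α := Real.rpow_pos_of_pos hxn α
  have hP : (0:ℝ) < t ^ α := Real.rpow_pos_of_pos ht0 α
  have e1 : t ^ (1 + α) = t * t ^ α := by
    rw [Real.rpow_add ht0, Real.rpow_one]
  have e2 : t ^ (α - 1) = t ^ α / t := by
    rw [Real.rpow_sub ht0, Real.rpow_one]
  have e3 : ‖x‖ ^ (2 * α) = t ^ α := rpow_two_mul x α
  have e4 : t ^ α = ‖x‖ ^ α * ‖x‖ ^ α := by
    rw [← Real.rpow_add hxn, show α + α = 2 * α by ring, e3]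
  rw [e3, e1, e2, e4, hKdef, hC]
  simp only [QG]
  have hD : t * (‖x‖ ^ α * ‖x‖ ^ α) + (1 + α) ^ 2 * s ≠ 0 := by positivity
  field_simp
  ring

end
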